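/- Let 𝒢 = (𝒞, ℰ) be a finite simple graph, and suppose the string assignment satisfies 𝒮_c ∩ 𝒮_{c'} = ∅ if and only if (c,c') ∈ ℰ. Let χ : [k] → 𝒞 be a 𝒢-reduced word (k ≥ 1) and ℓ : [k] → ℕ with ℓ(i) ≥ 1. Let T be the edge-colored directed multigraph consisting of two directed cycles glued at a single common vertex: the first cycle is the concatenation of directed paths P_1, …, P_k, where P_i has ℓ(i) edges all colored χ(i), and the second cycle is the concatenation of directed paths P'_1, …, P'_k, where P'_i has ℓ(i) edges all colored χ(i); for i ∈ [k] let u_i denote the initial vertex of P_i on the first cycle and u'_i the initial vertex of P'_i on the second cycle, with u_1 = u'_1 the glued common vertex. Given a family π = (π_s)_{s∈𝒮} of partitions of V(T), let J_π ⊆ [k] ∪ (−[k]) consist of those i ∈ [k] such that u_i and u_{i+1} (indices cyclic, u_{k+1} := u_1) lie in the same block of ⋀_{s∈𝒮} π_s, together with those −i (i ∈ [k]) such that u'_i and u'_{i+1} (cyclically) lie in the same block of ⋀_{s∈𝒮} π_s. Then the following three conditions cannot all hold: (1) π_s ≥ ρ_s for all s ∈ 𝒮; (2) GCC(T,π,s)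 is a tree for all s ∈ 𝒮; (3) J_π = ∅. -/

import Mathlib

open Filter MeasureTheory Matrix
open scoped BigOperators Classical

namespace GraphPaper

/-! ### Directed multigraphs (test digraphs) -/

/-- A directed multigraph with vertex type `V` and edge type `E`. -/
structure Digr (V E : Type*) where
  src : E → V
  tgt : E → V

namespace Digr

variable {V E : Type*} (D : Digr V E)

/-- One-step (direction-agnostic) adjacency. -/
def Adj (v w : V) : Prop := ∃ e : E, D.src e = v ∧ D.tgt e = w

/-- The setoid of weakly connected components. -/
def compSetoid : Setoid V := Relation.EqvGen.setoid D.Adj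

/-- The weakly connected components. -/
def Components : Type _ := Quotient D.compSetoid

/-- The number of weakly connected components. -/
noncomputable def ncomp : ℕ := Nat.card D.Components

/-- Weak connectedness. -/
def IsConnected : Prop := Nonempty V ∧ ∀ v w : V, D.compSetoid v w

/-- The digraph with one edge removed. -/
def erase (e₀ : E) : Digr V {e : E // e ≠ e₀} :=
  ⟨fun e => D.src e.1, fun e => D.tgt e.1⟩

/-- `e₀` is a cut edge: removing it increases the number of weakly connected components. -/
def IsCutEdge (e₀ : E) : Prop := D.ncomp < (D.erase e₀).ncomp

/-- Two-edge-connectedness: weakly connected with no cut edge. -/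
def IsTwoEdgeConnected : Prop := D.IsConnected ∧ ∀ e : E, ¬ D.IsCutEdge e

/-- A tree (as an undirected multigraph): connected, with no cycles and no parallel
edges; equivalently, connected and every edge is a cut edge. -/
def IsTree : Prop := D.IsConnected ∧ ∀ e : E, D.IsCutEdge e

/-- Two vertices are related iff they are joined by a path containing no cut edges;
the classes are the two-edge-connected components. -/
def tecSetoid : Setoid V :=
  Relation.EqvGen.setoid (fun v w => ∃ e : E, ¬ D.IsCutEdge e ∧ D.src e = v ∧ D.tgt e = w)

/-- The degree of a two-edge-connected component in the forest `ℱ(D)`: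
the number of cut edges incident to it. -/
noncomputable def tecDeg (b : Quotient D.tecSetoid) : ℕ :=
  Nat.card {e : E // D.IsCutEdge e ∧
    (Quotient.mk D.tecSetoid (D.src e) = b ∨ Quotient.mk D.tecSetoid (D.tgt e) = b)}

/-- `𝔣(D)`: the total number of leaves of the forest `ℱ(D)` of two-edge-connected
components, an isolated vertex counting as two leaves. -/
noncomputable def leafCount : ℕ :=
  ∑ᶠ b : Quotient D.tecSetoid,
    (if D.tecDeg b = 0 then 2 else if D.tecDeg b = 1 then 1 else 0)

/-- The quotient digraph by a partition (setoid) of the vertices. -/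
def quotient (s : Setoid V) : Digr (Quotient s) E :=
  ⟨fun e => Quotient.mk s (D.src e), fun e => Quotient.mk s (D.tgt e)⟩

/-- The subgraph retaining only the edges satisfying `p` (all vertices kept). -/
def restrict (p : E → Prop) : Digr V {e : E // p e} :=
  ⟨fun e => D.src e.1, fun e => D.tgt e.1⟩

/-- The trace of a test digraph with labels `A`. -/
noncomputable def tdTrace {ι : Type*} (A : E → Matrix ι ι ℂ) : ℂ :=
  (1 / (Nat.card ι : ℂ) ^ D.ncomp) *
    ∑ᶠ i : V → ι, ∏ᶠ e : E, A e (i (D.tgt e)) (i (D.src e))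

/-- The injective trace of a test digraph with labels `A`. -/
noncomputable def tdTraceInj {ι : Type*} (A : E → Matrix ι ι ℂ) : ℂ :=
  (1 / (Nat.card ι : ℂ) ^ D.ncomp) *
    ∑ᶠ i : V → ι,
      if Function.Injective i then ∏ᶠ e : E, A e (i (D.tgt e)) (i (D.src e)) else 0

end Digr

/-! ### Colored digraphs, partitions, and the associated auxiliary graphs -/

section Colored

variable {V E S C : Type*}

/-- `ρ_s` : the partition of `V` into weakly connected components of the subgraph of `D`
retaining only edges whose color is not related to the string `s`. -/
def rhoSetoid (D : Digr V E) (χ : E → C) (rel : S → C → Prop) (s : S) : Setoid V :=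
  Relation.EqvGen.setoid (fun v w => ∃ e : E, ¬ rel s (χ e) ∧ D.src e = v ∧ D.tgt e = w)

/-- `ω_{π,c} = ⋀_{s ∈ 𝒮_c} π_s`, the common refinement. -/
def omegaSetoid (rel : S → C → Prop) (π : S → Setoid V) (c : C) : Setoid V :=
  ⨅ s : {s : S // rel s c}, π s.1

/-- `T_{π,c} = (T|_c)/ω_{π,c}`. -/
def Tpc (D : Digr V E) (χ : E → C) (rel : S → C → Prop) (π : S → Setoid V) (c : C) :
    Digr (Quotient (omegaSetoid rel π c)) {e : E // χ e = c} :=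
  (D.restrict (fun e => χ e = c)).quotient (omegaSetoid rel π c)

/-- `𝒢_{π,s} = (T|_{𝒞_s})/π_s`. -/
def Gps (D : Digr V E) (χ : E → C) (rel : S → C → Prop) (π : S → Setoid V) (s : S) :
    Digr (Quotient (π s)) {e : E // rel s (χ e)} :=
  (D.restrict (fun e => rel s (χ e))).quotient (π s)

/-- The map `h_{s,c} : V(T_{π,c}) → V(𝒢_{π,s})`, `[v]_{ω_{π,c}} ↦ [v]_{π_s}`. -/
def hmap (rel : S → C → Prop) (π : S → Setoid V) {s : S} {c : C} (h : rel s c) :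
    Quotient (omegaSetoid rel π c) → Quotient (π s) :=
  fun q => Quotient.liftOn q (fun v => Quotient.mk (π s) v)
    (fun a b hab => Quot.sound
      (Setoid.le_def.mp (iInf_le (fun s' : {s' : S // rel s' c} => π s'.1) ⟨s, h⟩) hab))

/-- The vertex set of the graph of colored components `GCC(T,π,s)`. -/
def GCCVert (D : Digr V E) (χ : E → C) (rel : S → C → Prop) (π : S → Setoid V) (s : S) :
    Type _ :=
  Quotient (π s) ⊕ (Σ c : {c : C // rel s c}, (Tpc D χ rel π c.1).Components)

/-- The edge set of `GCC(T,π,s)`. -/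
def GCCEdge (rel : S → C → Prop) (π : S → Setoid V) (s : S) : Type _ :=
  Σ c : {c : C // rel s c}, Quotient (omegaSetoid rel π c.1)

/-- The graph of colored components `GCC(T,π,s)`: the bipartite multigraph with an edge
for each `v ∈ V(T_{π,c})` (`c ∈ 𝒞_s`), joining the component of `T_{π,c}` containing `v`
to `h_{s,c}(v)`. -/
def GCC (D : Digr V E) (χ : E → C) (rel : S → C → Prop) (π : S → Setoid V) (s : S) :
    Digr (GCCVert D χ rel π s) (GCCEdge rel π s) where
  src := fun p => Sum.inr ⟨p.1, Quotient.mk (Tpc D χ rel π p.1.1).compSetoid p.2⟩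
  tgt := fun p => Sum.inl (hmap rel π p.1.2 p.2)

end Colored

/-! ### The matrix model -/

section Model

variable {S C : Type*}

/-- Index set for `⊗_{s ∈ 𝒮} M_N(ℂ)`. -/
abbrev BigIx (S : Type*) (N : ℕ) := S → Fin N

/-- Index set for `⊗_{s ∈ 𝒮_c} M_N(ℂ)`. -/
abbrev ColIx (rel : S → C → Prop) (c : C) (N : ℕ) := {s : S // rel s c} → Fin N

/-- View a matrix in `⊗_{s ∈ 𝒮_c} M_N(ℂ)` inside `⊗_{s ∈ 𝒮} M_N(ℂ)` by tensoring with
the identity on the remaining factors. -/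
noncomputable def embed [Fintype S] (rel : S → C → Prop) (c : C) {N : ℕ}
    (X : Matrix (ColIx rel c N) (ColIx rel c N) ℂ) :
    Matrix (BigIx S N) (BigIx S N) ℂ :=
  Matrix.of fun a b =>
    if (∀ s : S, ¬ rel s c → a s = b s) then X (fun s => a s.1) (fun s => b s.1) else 0

/-- The permutation matrix of a permutation. -/
def permMat {ι : Type*} [DecidableEq ι] (σ : Equiv.Perm ι) : Matrix ι ι ℂ :=
  Matrix.of fun i j => if σ j = i then 1 else 0

/-- `X̲ = Σ_c^* X Σ_c`, viewed inside `⊗_{s ∈ 𝒮} M_N(ℂ)`. -/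
noncomputable def conjEmbed [Fintype S] (rel : S → C → Prop) (c : C) {N : ℕ}
    (σc : Equiv.Perm (ColIx rel c N))
    (X : Matrix (ColIx rel c N) (ColIx rel c N) ℂ) :
    Matrix (BigIx S N) (BigIx S N) ℂ :=
  embed rel c ((permMat σc)ᴴ * X * permMat σc)

/-- `Δ`, the conditional expectation onto the diagonal. -/
def diagPart {ι : Type*} [DecidableEq ι] (M : Matrix ι ι ℂ) : Matrix ι ι ℂ :=
  Matrix.diagonal fun i => M i i

/-- The normalized `L²`-norm `‖M‖₂ = tr_n(M^*M)^{1/2}`. -/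
noncomputable def l2norm {ι : Type*} [Fintype ι] (M : Matrix ι ι ℂ) : ℝ :=
  Real.sqrt ((Matrix.trace (Mᴴ * M) / (Fintype.card ι : ℂ)).re)

/-- The operator norm of a matrix acting on Euclidean space. -/
noncomputable def opNorm {ι : Type*} [Fintype ι] [DecidableEq ι] (M : Matrix ι ι ℂ) : ℝ :=
  ‖Matrix.toEuclideanCLM (𝕜 := ℂ) M‖

/-- The ordered product `f 0 * f 1 * ⋯ * f (k-1)`. -/
def prodList {M : Type*} [Monoid M] (k : ℕ) (f : Fin k → M) : M :=
  ((List.finRange k).map f).prod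

/-- `γ_N(T,π)`. -/
noncomputable def gammaN {V E : Type*} [Fintype S] (rel : S → C → Prop)
    (D : Digr V E) (χ : E → C) (N : ℕ)
    (X : (e : E) → Matrix (ColIx rel (χ e) N) (ColIx rel (χ e) N) ℂ)
    (Λ : V → Matrix (BigIx S N) (BigIx S N) ℂ)
    (π : S → Setoid V)
    (σ : (c : C) → Equiv.Perm (ColIx rel c N)) : ℂ :=
  (1 / (N : ℂ) ^ (Nat.card S)) *
    ∑ᶠ i : V → BigIx S N,
      if (∀ s : S, Setoid.ker (fun v => i v s) = π s) then
        (∏ᶠ v : V, Λ v (i v) (i v)) *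
          ∏ᶠ e : E, (conjEmbed rel (χ e) (σ (χ e)) (X e)) (i (D.tgt e)) (i (D.src e))
      else 0

/-- `λ_N(T,π)`. -/
noncomputable def lambdaN {V : Type*} [Fintype S] (N : ℕ)
    (Λ : V → Matrix (BigIx S N) (BigIx S N) ℂ) (π : S → Setoid V) : ℂ :=
  (1 / (N : ℂ) ^ (∑ᶠ s : S, Nat.card (Quotient (π s)))) *
    ∑ᶠ i : V → BigIx S N,
      if (∀ s : S, Setoid.ker (fun v => i v s) = π s) then (∏ᶠ v : V, Λ v (i v) (i v))
      else 0

/-- `τ_{N^{#𝒮}}(T̊)`, the trace of the test digraph `T` with a `Λ_v`-labelled self-loop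
added at each vertex `v`. -/
noncomputable def ringTrace {V E : Type*} [Fintype S] (rel : S → C → Prop)
    (D : Digr V E) (χ : E → C) (N : ℕ)
    (X : (e : E) → Matrix (ColIx rel (χ e) N) (ColIx rel (χ e) N) ℂ)
    (Λ : V → Matrix (BigIx S N) (BigIx S N) ℂ)
    (σ : (c : C) → Equiv.Perm (ColIx rel c N)) : ℂ :=
  (1 / (N : ℂ) ^ (Nat.card S)) *
    ∑ᶠ i : V → BigIx S N,
      (∏ᶠ v : V, Λ v (i v) (i v)) *
        ∏ᶠ e : E, (conjEmbed rel (χ e) (σ (χ e)) (X e)) (i (D.tgt e)) (i (D.src e))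

/-- Expectation with respect to independent uniformly random permutations, one for each
color: the average over all tuples of permutations. -/
noncomputable def Eperm [Fintype S] (rel : S → C → Prop) (N : ℕ)
    (f : ((c : C) → Equiv.Perm (ColIx rel c N)) → ℂ) : ℂ :=
  (∑ᶠ σ : (c : C) → Equiv.Perm (ColIx rel c N), f σ) /
    (Nat.card ((c : C) → Equiv.Perm (ColIx rel c N)) : ℂ)

/-- Transport a matrix label along an equality of colors. -/
def castCol (rel : S → C → Prop) {N : ℕ} {c c' : C} (h : c = c')
    (X : Matrix (ColIx rel c N) (ColIx rel c N) ℂ) :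
    Matrix (ColIx rel c' N) (ColIx rel c' N) ℂ := h ▸ X

/-- The uniform probability measure on the tuples of permutations (with the discrete
`σ`-algebra). -/
noncomputable def uniformTupleMeasure [Fintype C] [Fintype S] (rel : S → C → Prop) (N : ℕ) :=
  letI : MeasurableSpace ((c : C) → Equiv.Perm (ColIx rel c N)) := ⊤
  haveI : Nonempty ((c : C) → Equiv.Perm (ColIx rel c N)) := ⟨fun _ => 1⟩
  ((PMF.uniformOfFintype ((c : C) → Equiv.Perm (ColIx rel c N))).toMeasure :
    Measure ((c : C) → Equiv.Perm (ColIx rel c N)))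

/-- The tuple `(Σ_c)_{c ∈ 𝒞}` of random permutations is uniformly distributed on the
product (equivalently, the `Σ_c` are independent and each uniform). -/
def hasUniformLaw [Fintype C] [Fintype S] (rel : S → C → Prop) {Ω : Type*}
    [MeasurableSpace Ω] (P : Measure Ω) (N : ℕ)
    (Sp : (c : C) → Ω → Equiv.Perm (ColIx rel c N)) : Prop :=
  letI : MeasurableSpace ((c : C) → Equiv.Perm (ColIx rel c N)) := ⊤
  Measure.map (fun ω c => Sp c ω) P = uniformTupleMeasure rel N

end Model

/-- A word `χ : [k] → 𝒞` is `𝒢`-reduced. -/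
def GReduced {C : Type*} (Edg : C → C → Prop) {k : ℕ} (χ : Fin k → C) : Prop :=
  ∀ i j : Fin k, i < j → χ i = χ j → ∃ l : Fin k, i < l ∧ l < j ∧ ¬ Edg (χ i) (χ l)

/-! ### Sofic groups and graph products of groups -/

/-- The normalized Hamming distance on `S_N`. -/
noncomputable def dHamm {n : ℕ} (σ τ : Equiv.Perm (Fin n)) : ℝ :=
  ((Finset.univ.filter fun j : Fin n => σ j ≠ τ j).card : ℝ) / n

/-- A group is sofic if it admits an asymptotic homomorphism into permutation groups. -/
def IsSofic (Γ : Type*) [Group Γ] : Prop :=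
  ∃ (Nk : ℕ → ℕ) (σ : (k : ℕ) → Γ → Equiv.Perm (Fin (Nk k))),
    Tendsto Nk atTop atTop ∧
    (∀ g h : Γ, Tendsto (fun k => dHamm (σ k g * σ k h) (σ k (g * h))) atTop (nhds 0)) ∧
    (∀ g : Γ, Tendsto (fun k => dHamm (σ k g) 1) atTop
      (nhds (if g = 1 then 0 else 1)))

/-- The normal subgroup of the free product generated by the commutators of elements of
vertex groups joined by an edge. -/
def graphProductKer {C : Type*} (Edg : C → C → Prop) (G : C → Type*)
    [∀ c, Group (G c)] : Subgroup (Monoid.CoprodI G) :=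
  Subgroup.normalClosure
    {x | ∃ (c c' : C) (_ : Edg c c') (g : G c) (g' : G c'),
      x = Monoid.CoprodI.of g * Monoid.CoprodI.of g' *
        (Monoid.CoprodI.of g)⁻¹ * (Monoid.CoprodI.of g')⁻¹}

/-- The graph product of the groups `(G c)_{c ∈ 𝒞}` over the graph with edge relation
`Edg`. -/
def GraphProduct {C : Type*} (Edg : C → C → Prop) (G : C → Type*) [∀ c, Group (G c)] :
    Type _ :=
  Monoid.CoprodI G ⧸ graphProductKer Edg G

instance graphProductKer_normal {C : Type*} (Edg : C → C → Prop) (G : C → Type*)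
    [∀ c, Group (G c)] : (graphProductKer Edg G).Normal :=
  Subgroup.normalClosure_normal

instance {C : Type*} (Edg : C → C → Prop) (G : C → Type*) [∀ c, Group (G c)] :
    Group (GraphProduct Edg G) :=
  QuotientGroup.Quotient.group _

/-- The group element corresponding to a word in the generators and their inverses:
the letter `(j, tt)` is `g_j`, and `(j, ff)` is `g_j⁻¹`. -/
def wordElemG {Γ : Type*} [Group Γ] (g : ℕ → Γ) {m : ℕ} (w : Fin m → ℕ × Bool) : Γ :=
  prodList m (fun i => if (w i).2 then g (w i).1 else (g (w i).1)⁻¹)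

/-- The matrix product corresponding to a word in permutation matrices and their
inverses. -/
noncomputable def wordMat {N m : ℕ} (T : ℕ → Equiv.Perm (Fin N)) (w : Fin m → ℕ × Bool) :
    Matrix (Fin N) (Fin N) ℂ :=
  prodList m (fun i => if (w i).2 then permMat (T (w i).1) else (permMat (T (w i).1))⁻¹)

/-- The cyclic successor of an edge-position in the concatenation of the paths
`P_1, …, P_k` (path `P_i` having `ℓ i` edges) closed up into a cycle. -/
def cycNext (k : ℕ) (ℓ : Fin k → ℕ) (hℓ : ∀ i, 0 < ℓ i) :
    (Σ i : Fin k, Fin (ℓ i)) → Σ i : Fin k, Fin (ℓ i) :=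
  fun p => if h : (p.2 : ℕ) + 1 < ℓ p.1 then ⟨p.1, ⟨(p.2 : ℕ) + 1, h⟩⟩
    else ⟨⟨((p.1 : ℕ) + 1) % k, Nat.mod_lt _ p.1.pos⟩, ⟨0, hℓ _⟩⟩

/-- The identification gluing the initial vertex of the first cycle with the initial
vertex of the second cycle. -/
def glueSetoid (k : ℕ) (ℓ : Fin k → ℕ) (hk : 0 < k) (hℓ : ∀ i, 0 < ℓ i) :
    Setoid ((Σ i : Fin k, Fin (ℓ i)) ⊕ (Σ i : Fin k, Fin (ℓ i))) :=
  Relation.EqvGen.setoid (fun v w =>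
    v = Sum.inl ⟨⟨0, hk⟩, ⟨0, hℓ _⟩⟩ ∧ w = Sum.inr ⟨⟨0, hk⟩, ⟨0, hℓ _⟩⟩)

/-- The edge-colored directed multigraph consisting of two directed cycles (each the
concatenation of directed paths `P_1, …, P_k`, with `P_i` having `ℓ i` edges) glued at a
single common vertex.  Each edge is identified with its starting position; the edge at
position `p` goes from `p` to `cycNext p`. -/
def twoCycleDigr (k : ℕ) (ℓ : Fin k → ℕ) (hk : 0 < k) (hℓ : ∀ i, 0 < ℓ i) :
    Digr (Quotient (glueSetoid k ℓ hk hℓ))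
      ((Σ i : Fin k, Fin (ℓ i)) ⊕ (Σ i : Fin k, Fin (ℓ i))) where
  src := fun ed => Quotient.mk (glueSetoid k ℓ hk hℓ) ed
  tgt := fun ed =>
    Quotient.mk (glueSetoid k ℓ hk hℓ) (Sum.map (cycNext k ℓ hℓ) (cycNext k ℓ hℓ) ed)

/-- The coloring of the edges: every edge of `P_i` or `P'_i` is colored `χ i`. -/
def twoCycleColor {C : Type*} (k : ℕ) (ℓ : Fin k → ℕ) (χ : Fin k → C) :
    ((Σ i : Fin k, Fin (ℓ i)) ⊕ (Σ i : Fin k, Fin (ℓ i))) → C :=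
  Sum.elim (fun p => χ p.1) (fun p => χ p.1)

/-- `u_i`, the initial vertex of `P_i` on the first cycle. -/
def uVert (k : ℕ) (ℓ : Fin k → ℕ) (hk : 0 < k) (hℓ : ∀ i, 0 < ℓ i) (i : Fin k) :
    Quotient (glueSetoid k ℓ hk hℓ) :=
  Quotient.mk _ (Sum.inl ⟨i, ⟨0, hℓ i⟩⟩)

/-- `u'_i`, the initial vertex of `P'_i` on the second cycle. -/
def uVert' (k : ℕ) (ℓ : Fin k → ℕ) (hk : 0 < k) (hℓ : ∀ i, 0 < ℓ i) (i : Fin k) :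
    Quotient (glueSetoid k ℓ hk hℓ) :=
  Quotient.mk _ (Sum.inr ⟨i, ⟨0, hℓ i⟩⟩)


/-! ### Auxiliary infrastructure for the proof of `statement14` -/

section Walks

variable {V E : Type*}

/-- The source of a step (an edge together with a direction of traversal). -/
def stepSrc (D : Digr V E) (p : E × Bool) : V := if p.2 then D.src p.1 else D.tgt p.1

/-- The target of a step. -/
def stepTgt (D : Digr V E) (p : E × Bool) : V := if p.2 then D.tgt p.1 else D.src p.1

/-- Undirected walks in a directed multigraph, as lists of steps. -/
def IsWalk (D : Digr V E) : V → List (E × Bool) → V → Prop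
  | v, [], w => v = w
  | v, p :: l, w => v = stepSrc D p ∧ IsWalk D (stepTgt D p) l w

lemma isWalk_nil (D : Digr V E) (v w : V) : IsWalk D v [] w ↔ v = w := Iff.rfl

lemma isWalk_cons (D : Digr V E) (p : E × Bool) (l : List (E × Bool)) (v w : V) :
    IsWalk D v (p :: l) w ↔ v = stepSrc D p ∧ IsWalk D (stepTgt D p) l w := Iff.rfl

lemma isWalk_append (D : Digr V E) :
    ∀ (l₁ l₂ : List (E × Bool)) (v w : V),
      IsWalk D v (l₁ ++ l₂) w ↔ ∃ u, IsWalk D v l₁ u ∧ IsWalk D u l₂ w := by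
  intro l₁
  induction l₁ with
  | nil =>
    intro l₂ v w
    constructor
    · intro h; exact ⟨v, rfl, h⟩
    · rintro ⟨u, hu, h⟩
      rw [isWalk_nil] at hu; subst hu; exact h
  | cons p l ih =>
    intro l₂ v w
    simp only [List.cons_append, isWalk_cons]
    constructor
    · rintro ⟨h1, h2⟩
      obtain ⟨u, h3, h4⟩ := (ih l₂ _ w).mp h2
      exact ⟨u, ⟨h1, h3⟩, h4⟩
    · rintro ⟨u, ⟨h1, h3⟩, h4⟩
      exact ⟨h1, (ih l₂ _ w).mpr ⟨u, h3, h4⟩⟩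

lemma walk_erase_rel (D : Digr V E) (e₀ : E) :
    ∀ (l : List (E × Bool)) (v w : V), IsWalk D v l w → (∀ q ∈ l, q.1 ≠ e₀) →
      Relation.EqvGen (D.erase e₀).Adj v w := by
  intro l
  induction l with
  | nil =>
    intro v w h _
    rw [isWalk_nil] at h; subst h; exact Relation.EqvGen.refl v
  | cons q l ih =>
    intro v w h hne
    rw [isWalk_cons] at h
    obtain ⟨h1, h2⟩ := h
    have hq : q.1 ≠ e₀ := hne q List.mem_cons_self
    have step : Relation.EqvGen (D.erase e₀).Adj v (stepTgt D q) := by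
      subst h1
      by_cases hd : q.2
      · exact Relation.EqvGen.rel _ _
          ⟨⟨q.1, hq⟩, by simp [Digr.erase, stepSrc, hd], by simp [Digr.erase, stepTgt, hd]⟩
      · exact Relation.EqvGen.symm _ _ (Relation.EqvGen.rel _ _
          ⟨⟨q.1, hq⟩, by simp [Digr.erase, stepTgt, hd], by simp [Digr.erase, stepSrc, hd]⟩)
    exact Relation.EqvGen.trans _ _ _ step
      (ih _ _ h2 (fun q' hq' => hne q' (List.mem_cons_of_mem _ hq')))

/-- An edge whose removal increases the number of weakly connected components is a
bridge: its endpoints are not connected after it has been erased. -/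
lemma not_erase_rel_of_isCutEdge (D : Digr V E) (e₀ : E) (h : D.IsCutEdge e₀) :
    ¬ Relation.EqvGen (D.erase e₀).Adj (D.src e₀) (D.tgt e₀) := by
  intro hc
  have hle : ∀ a b, Relation.EqvGen D.Adj a b → Relation.EqvGen (D.erase e₀).Adj a b := by
    intro a b hab
    induction hab with
    | rel x y hxy =>
      obtain ⟨e, hsx, hty⟩ := hxy
      by_cases he : e = e₀
      · subst he; subst hsx; subst hty; exact hc
      · exact Relation.EqvGen.rel _ _ ⟨⟨e, he⟩, hsx, hty⟩
    | refl x => exact Relation.EqvGen.refl x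
    | symm x y _ ihxy => exact Relation.EqvGen.symm _ _ ihxy
    | trans x y z _ _ ih1 ih2 => exact Relation.EqvGen.trans _ _ _ ih1 ih2
  have hge : ∀ a b, Relation.EqvGen (D.erase e₀).Adj a b → Relation.EqvGen D.Adj a b := by
    intro a b hab
    induction hab with
    | rel x y hxy =>
      obtain ⟨e, hsx, hty⟩ := hxy
      exact Relation.EqvGen.rel _ _ ⟨e.1, hsx, hty⟩
    | refl x => exact Relation.EqvGen.refl x
    | symm x y _ ihxy => exact Relation.EqvGen.symm _ _ ihxy
    | trans x y z _ _ ih1 ih2 => exact Relation.EqvGen.trans _ _ _ ih1 ih2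
  have hset : D.compSetoid = (D.erase e₀).compSetoid :=
    Setoid.ext fun a b => ⟨hle a b, hge a b⟩
  have hcut := h
  unfold Digr.IsCutEdge Digr.ncomp Digr.Components at hcut
  rw [hset] at hcut
  exact lt_irrefl _ hcut

lemma exists_first_split {α : Type*} (P : α → Prop) :
    ∀ (l : List α), (∃ x ∈ l, P x) → ∃ l₁ x l₂, l = l₁ ++ x :: l₂ ∧ P x ∧ ∀ y ∈ l₁, ¬ P y := by
  intro l
  induction l with
  | nil => rintro ⟨x, hx, -⟩; cases hx
  | cons a l ih =>
    intro hex
    by_cases ha : P a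
    · exact ⟨[], a, l, rfl, ha, by simp⟩
    · obtain ⟨x, hx, hPx⟩ := hex
      rcases List.mem_cons.mp hx with rfl | hx'
      · exact absurd hPx ha
      · obtain ⟨l₁, y, l₂, heq, h1, h2⟩ := ih ⟨x, hx', hPx⟩
        refine ⟨a :: l₁, y, l₂, by rw [heq, List.cons_append], h1, ?_⟩
        intro z hz
        rcases List.mem_cons.mp hz with rfl | hz'
        · exact ha
        · exact h2 z hz'

/-- In a digraph all of whose edges are bridges, every nonempty closed walk contains an
immediate backtrack. -/
lemma exists_backtrack (D : Digr V E)
    (hbr : ∀ e : E, ¬ Relation.EqvGen (D.erase e).Adj (D.src e) (D.tgt e)) :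
    ∀ (n : ℕ) (l : List (E × Bool)) (v : V), l.length ≤ n → l ≠ [] → IsWalk D v l v →
      ∃ (l₁ : List (E × Bool)) (e : E) (d : Bool) (l₂ : List (E × Bool)), l = l₁ ++ (e, d) :: (e, !d) :: l₂ := by
  intro n
  induction n with
  | zero =>
    intro l v hl hnil _
    exact absurd (List.length_eq_zero_iff.mp (Nat.le_zero.mp hl)) hnil
  | succ n ih =>
    intro l v hl hnil hw
    obtain ⟨p, rest, rfl⟩ : ∃ p rest, l = p :: rest := by
      cases l with
      | nil => exact absurd rfl hnil
      | cons p rest => exact ⟨p, rest, rfl⟩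
    rw [isWalk_cons] at hw
    obtain ⟨hv, hwrest⟩ := hw
    by_cases hall : ∀ q ∈ rest, q.1 ≠ p.1
    · exfalso
      have hrel := walk_erase_rel D p.1 rest _ _ hwrest hall
      rw [hv] at hrel
      obtain ⟨e₀, d₀⟩ := p
      apply hbr e₀
      cases d₀ <;>
        first
        | simpa [stepSrc, stepTgt] using hrel
        | exact Relation.EqvGen.symm _ _ (by simpa [stepSrc, stepTgt] using hrel)
    · push_neg at hall
      obtain ⟨q0, hq0mem, hq0⟩ := hall
      obtain ⟨l₁, q, l₂, hsplit, hqP, hl₁⟩ :=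
        exists_first_split (fun q => q.1 = p.1) rest ⟨q0, hq0mem, hq0⟩
      subst hsplit
      obtain ⟨u, hu1, hu2⟩ := (isWalk_append D l₁ (q :: l₂) _ _).mp hwrest
      rw [isWalk_cons] at hu2
      obtain ⟨hu, -⟩ := hu2
      have hrel := walk_erase_rel D p.1 l₁ _ _ hu1 hl₁
      rw [hu] at hrel
      obtain ⟨e₀, d₀⟩ := p
      obtain ⟨e₁, d₁⟩ := q
      simp only at hqP
      subst hqP
      by_cases hdd : d₁ = d₀
      · exfalso
        subst hdd
        apply hbr e₁
        cases d₁ <;>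
          first
          | simpa [stepSrc, stepTgt] using hrel
          | exact Relation.EqvGen.symm _ _ (by simpa [stepSrc, stepTgt] using hrel)
      · have hd1 : d₁ = !d₀ := by
          cases d₀ <;> cases d₁ <;> simp_all
        subst hd1
        cases l₁ with
        | nil => exact ⟨[], e₁, d₀, l₂, rfl⟩
        | cons r l₁' =>
          have hSrcTgt : stepSrc D (e₁, !d₀) = stepTgt D (e₁, d₀) := by
            cases d₀ <;> simp [stepSrc, stepTgt]
          have hclosed : IsWalk D (stepTgt D (e₁, d₀)) (r :: l₁') (stepTgt D (e₁, d₀)) := by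
            rw [hu, hSrcTgt] at hu1
            exact hu1
          have hlen : (r :: l₁').length ≤ n := by
            have := hl
            simp only [List.length_cons, List.length_append] at this ⊢
            omega
          obtain ⟨m₁, e, d, m₂, hm⟩ := ih (r :: l₁') _ hlen (by simp) hclosed
          refine ⟨(e₁, d₀) :: m₁, e, d, m₂ ++ (e₁, !d₀) :: l₂, ?_⟩
          show (e₁, d₀) :: ((r :: l₁') ++ (e₁, !d₀) :: l₂) = _
          rw [hm]
          simp

end Walks

section ListAux

lemma fm_first {α β : Type*} (f : α → List β)
    (hf : ∀ t, f t = [] ∨ ∃ u v, f t = [u, v]) :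
    ∀ (ts : List α) (b : β) (l₂ : List β), ts.flatMap f = b :: l₂ →
      ∃ ts₁ t ts₂, ts = ts₁ ++ t :: ts₂ ∧ ∃ v, f t = [b, v] := by
  intro ts
  induction ts with
  | nil => intro b l₂ h; simp at h
  | cons t ts ih =>
    intro b l₂ h
    rcases hf t with h0 | ⟨u, v, huv⟩
    · rw [List.flatMap_cons, h0, List.nil_append] at h
      obtain ⟨ts₁, t', ts₂, rfl, hv⟩ := ih b l₂ h
      exact ⟨t :: ts₁, t', ts₂, rfl, hv⟩
    · rw [List.flatMap_cons, huv] at h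
      simp only [List.cons_append, List.cons.injEq] at h
      obtain ⟨rfl, -⟩ := h
      exact ⟨[], t, ts, rfl, v, huv⟩

lemma fm_adj {α β : Type*} (f : α → List β)
    (hf : ∀ t, f t = [] ∨ ∃ u v, f t = [u, v]) :
    ∀ (ts : List α) (l₁ : List β) (a b : β) (l₂ : List β),
      ts.flatMap f = l₁ ++ a :: b :: l₂ →
      (∃ t ∈ ts, f t = [a, b]) ∨
      (∃ ts₁ t ts₂ t' ts₃, ts = ts₁ ++ t :: (ts₂ ++ t' :: ts₃) ∧
        (∃ u, f t = [u, a]) ∧ (∃ v, f t' = [b, v])) := by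
  intro ts
  induction ts with
  | nil =>
    intro l₁ a b l₂ h
    exfalso
    have hlen := congrArg List.length h
    rw [List.flatMap_nil] at hlen
    simp only [List.length_nil, List.length_append, List.length_cons] at hlen
    omega
  | cons t ts ih =>
    intro l₁ a b l₂ h
    rcases hf t with h0 | ⟨u, v, huv⟩
    · rw [List.flatMap_cons, h0, List.nil_append] at h
      rcases ih l₁ a b l₂ h with ⟨t', ht', hfe⟩ | ⟨ts₁, t₁, ts₂, t₂, ts₃, rfl, hu, hv⟩
      · exact Or.inl ⟨t', List.mem_cons_of_mem _ ht', hfe⟩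
      · exact Or.inr ⟨t :: ts₁, t₁, ts₂, t₂, ts₃, rfl, hu, hv⟩
    · rw [List.flatMap_cons, huv] at h
      rcases l₁ with - | ⟨w, l₁⟩
      · simp only [List.nil_append, List.cons_append, List.cons.injEq] at h
        obtain ⟨rfl, rfl, -⟩ := h
        exact Or.inl ⟨t, List.mem_cons_self, huv⟩
      · rcases l₁ with - | ⟨w', l₁⟩
        · simp only [List.cons_append, List.nil_append, List.cons.injEq] at h
          obtain ⟨rfl, rfl, h⟩ := h
          obtain ⟨ts₁, t', ts₂, rfl, v', hv'⟩ := fm_first f hf ts b l₂ h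
          exact Or.inr ⟨[], t, ts₁, t', ts₂, rfl, ⟨u, huv⟩, ⟨v', hv'⟩⟩
        · simp only [List.cons_append, List.cons.injEq] at h
          obtain ⟨rfl, rfl, h⟩ := h
          rcases ih l₁ a b l₂ h with ⟨t', ht', hfe⟩ | ⟨ts₁, t₁, ts₂, t₂, ts₃, rfl, hu', hv'⟩
          · exact Or.inl ⟨t', List.mem_cons_of_mem _ ht', hfe⟩
          · exact Or.inr ⟨t :: ts₁, t₁, ts₂, t₂, ts₃, rfl, hu', hv'⟩

lemma range'_split : ∀ (ts₁ : List ℕ) (a m t : ℕ) (ts₂ : List ℕ),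
    List.range' a m = ts₁ ++ t :: ts₂ →
    t = a + ts₁.length ∧ ts₂ = List.range' (t + 1) (m - ts₁.length - 1) := by
  intro ts₁
  induction ts₁ with
  | nil =>
    intro a m t ts₂ h
    cases m with
    | zero => simp at h
    | succ m =>
      rw [List.range'_succ] at h
      simp only [List.nil_append, List.cons.injEq] at h
      obtain ⟨h1, h2⟩ := h
      subst h1
      refine ⟨by simp, ?_⟩
      have hlen0 : m + 1 - List.length ([] : List ℕ) - 1 = m := by simp
      rw [hlen0]
      exact h2.symm
  | cons c ts₁ ih =>
    intro a m t ts₂ h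
    cases m with
    | zero => simp at h
    | succ m =>
      rw [List.range'_succ] at h
      simp only [List.cons_append, List.cons.injEq] at h
      obtain ⟨h1, h2⟩ := h
      rw [h1] at h2
      obtain ⟨h3, h4⟩ := ih (c + 1) m t ts₂ h2
      constructor
      · simp only [List.length_cons]; omega
      · rw [h4]
        congr 1
        simp only [List.length_cons]
        omega

end ListAux

section MainAux

variable {V' E' S C : Type*}

/-- From the sigma-type equality of two `GCC`-edges, extract the equality of colors and
the `ω`-equivalence of the underlying vertices. -/
lemma sigma_eq_omega (rel : S → C → Prop) (π : S → Setoid V') (s : S)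
    {c c' : C} {h : rel s c} {h' : rel s c'} {x y : V'}
    (heq : (⟨⟨c, h⟩, Quotient.mk (omegaSetoid rel π c) x⟩ : GCCEdge rel π s)
          = ⟨⟨c', h'⟩, Quotient.mk (omegaSetoid rel π c') y⟩) :
    c = c' ∧ omegaSetoid rel π c x y := by
  obtain ⟨h1, h2⟩ := Sigma.mk.inj_iff.mp heq
  have hcc : c = c' := congrArg Subtype.val h1
  subst hcc
  exact ⟨rfl, Quotient.exact (eq_of_heq h2)⟩

/-- The pair of `GCC`-steps contributed by the letter at position `t`. -/
noncomputable def fblock (rel : S → C → Prop) (π : S → Setoid V') (ci : ℕ → C)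
    (U : ℕ → V') (s : S) (t : ℕ) : List (GCCEdge rel π s × Bool) :=
  if h : rel s (ci t) then
    [(⟨⟨ci t, h⟩, Quotient.mk (omegaSetoid rel π (ci t)) (U t)⟩, false),
     (⟨⟨ci t, h⟩, Quotient.mk (omegaSetoid rel π (ci t)) (U (t + 1))⟩, true)]
  else []

lemma fblock_pos (rel : S → C → Prop) (π : S → Setoid V') (ci : ℕ → C)
    (U : ℕ → V') (s : S) {t : ℕ} (h : rel s (ci t)) :
    fblock rel π ci U s t =
      [(⟨⟨ci t, h⟩, Quotient.mk (omegaSetoid rel π (ci t)) (U t)⟩, false),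
       (⟨⟨ci t, h⟩, Quotient.mk (omegaSetoid rel π (ci t)) (U (t + 1))⟩, true)] := by
  unfold fblock
  exact dif_pos h

lemma fblock_neg (rel : S → C → Prop) (π : S → Setoid V') (ci : ℕ → C)
    (U : ℕ → V') (s : S) {t : ℕ} (h : ¬ rel s (ci t)) :
    fblock rel π ci U s t = [] := by
  unfold fblock
  exact dif_neg h

lemma fblock_shape (rel : S → C → Prop) (π : S → Setoid V') (ci : ℕ → C)
    (U : ℕ → V') (s : S) :
    ∀ t, fblock rel π ci U s t = [] ∨ ∃ u v, fblock rel π ci U s t = [u, v] := by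
  intro t
  by_cases h : rel s (ci t)
  · exact Or.inr ⟨_, _, fblock_pos rel π ci U s h⟩
  · exact Or.inl (fblock_neg rel π ci U s h)

/-- The closed walk in `GCC(T,π,s)` traced out by a segment of the cycle. -/
lemma walkGCC (D : Digr V' E') (col : E' → C) (rel : S → C → Prop) (π : S → Setoid V')
    (ci : ℕ → C) (U : ℕ → V') (s : S)
    (H2 : ∀ t, (Tpc D col rel π (ci t)).compSetoid
        (Quotient.mk (omegaSetoid rel π (ci t)) (U t))
        (Quotient.mk (omegaSetoid rel π (ci t)) (U (t + 1))))
    (H3 : ∀ t, ¬ rel s (ci t) → π s (U t) (U (t + 1))) :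
    ∀ (m a : ℕ), IsWalk (GCC D col rel π s) (Sum.inl (Quotient.mk (π s) (U a)))
      ((List.range' a m).flatMap (fblock rel π ci U s))
      (Sum.inl (Quotient.mk (π s) (U (a + m)))) := by
  intro m
  induction m with
  | zero =>
    intro a
    simp only [List.range'_zero, List.flatMap_nil, isWalk_nil, Nat.add_zero]
    exact (isWalk_nil _ _ _).mpr rfl
  | succ m ih =>
    intro a
    have harith : a + 1 + m = a + (m + 1) := by omega
    rw [List.range'_succ, List.flatMap_cons]
    by_cases h : rel s (ci a)
    · rw [fblock_pos rel π ci U s h]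
      have hstep := ih (a + 1)
      rw [harith] at hstep
      rw [List.cons_append, List.cons_append, List.nil_append]
      refine (isWalk_cons _ _ _ _ _).mpr ⟨rfl, (isWalk_cons _ _ _ _ _).mpr ⟨?_, ?_⟩⟩
      · show (Sum.inr ⟨⟨ci a, h⟩, Quotient.mk (Tpc D col rel π (ci a)).compSetoid
              (Quotient.mk (omegaSetoid rel π (ci a)) (U a))⟩ : GCCVert D col rel π s)
          = Sum.inr ⟨⟨ci a, h⟩, Quotient.mk (Tpc D col rel π (ci a)).compSetoid
              (Quotient.mk (omegaSetoid rel π (ci a)) (U (a + 1)))⟩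
        have hq : Quotient.mk (Tpc D col rel π (ci a)).compSetoid
              (Quotient.mk (omegaSetoid rel π (ci a)) (U a))
            = Quotient.mk (Tpc D col rel π (ci a)).compSetoid
              (Quotient.mk (omegaSetoid rel π (ci a)) (U (a + 1))) :=
          Quotient.sound (H2 a)
        rw [hq]
      · exact hstep
    · rw [fblock_neg rel π ci U s h, List.nil_append]
      have hq : Quotient.mk (π s) (U a) = Quotient.mk (π s) (U (a + 1)) :=
        Quotient.sound (H3 a h)
      rw [hq]
      have hstep := ih (a + 1)
      rw [harith] at hstep
      exact hstep

/-- The main combinatorial induction: if some string `s` sees a letter of the window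
`[p,q]` and the endpoints of the window are `π_s`-equivalent, then some letter of the
word has `ω`-equivalent endpoints. -/
lemma mainInduction (D : Digr V' E') (col : E' → C) (rel : S → C → Prop)
    (π : S → Setoid V') (ci : ℕ → C) (U : ℕ → V') (k : ℕ)
    (H1 : ∀ (s : S) (e : GCCEdge rel π s),
      ¬ Relation.EqvGen ((GCC D col rel π s).erase e).Adj
        ((GCC D col rel π s).src e) ((GCC D col rel π s).tgt e))
    (H2 : ∀ t, (Tpc D col rel π (ci t)).compSetoid
        (Quotient.mk (omegaSetoid rel π (ci t)) (U t))
        (Quotient.mk (omegaSetoid rel π (ci t)) (U (t + 1))))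
    (H3 : ∀ (s : S) (t : ℕ), ¬ rel s (ci t) → π s (U t) (U (t + 1)))
    (H4 : ∀ t t' : ℕ, t < t' → t' < k → ci t = ci t' →
      ∃ (l : ℕ) (s' : S), t < l ∧ l < t' ∧ rel s' (ci t) ∧ rel s' (ci l)) :
    ∀ (n p q : ℕ) (s : S), q < k → q - p = n → π s (U p) (U (q + 1)) →
      (∃ l, p ≤ l ∧ l ≤ q ∧ rel s (ci l)) →
      ∃ t, t < k ∧ omegaSetoid rel π (ci t) (U t) (U (t + 1)) := by
  intro n
  induction n using Nat.strong_induction_on with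
  | _ n ih =>
  intro p q s hqk hn hπ hex
  obtain ⟨l0, hpl, hlq, hrel0⟩ := hex
  have hpq : p ≤ q := le_trans hpl hlq
  set m := q + 1 - p with hm
  have hw := walkGCC D col rel π ci U s H2 (H3 s) m p
  have hend : p + m = q + 1 := by omega
  rw [hend] at hw
  have hclose : Quotient.mk (π s) (U (q + 1)) = Quotient.mk (π s) (U p) :=
    Quotient.sound (Setoid.symm' _ hπ)
  rw [hclose] at hw
  have hnil : (List.range' p m).flatMap (fblock rel π ci U s) ≠ [] := by
    intro hnil
    have hall : ∀ x ∈ List.range' p m, fblock rel π ci U s x = [] := by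
      simpa using hnil
    have hmem : l0 ∈ List.range' p m := List.mem_range'_1.mpr ⟨hpl, by omega⟩
    have := hall l0 hmem
    rw [fblock_pos rel π ci U s hrel0] at this
    simp at this
  obtain ⟨l₁, Ed, d, l₂, hsplit⟩ :=
    exists_backtrack (GCC D col rel π s) (H1 s) _ _ _ le_rfl hnil hw
  rcases fm_adj _ (fblock_shape rel π ci U s) _ _ _ _ _ hsplit with
    ⟨t, htmem, hft⟩ | ⟨ts₁, t, ts₂, t', ts₃, hts, ⟨u, hu⟩, ⟨v, hv⟩⟩
  · -- backtrack within a single letter: that letter's endpoints are ω-equivalent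
    have htq : p ≤ t ∧ t < p + m := List.mem_range'_1.mp htmem
    by_cases h : rel s (ci t)
    · rw [fblock_pos rel π ci U s h] at hft
      simp only [List.cons.injEq, Prod.mk.injEq, eq_self_iff_true, and_true, true_and] at hft
      obtain ⟨hE1, hE2⟩ := hft
      obtain ⟨-, hrelω⟩ := sigma_eq_omega rel π s
        ((congrArg Prod.fst hE1).trans (congrArg Prod.fst hE2).symm)
      exact ⟨t, by omega, hrelω⟩
    · rw [fblock_neg rel π ci U s h] at hft
      simp at hft
  · -- backtrack between two distinct letters of the same color
    by_cases hins : rel s (ci t)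
    swap
    · rw [fblock_neg rel π ci U s hins] at hu; simp at hu
    by_cases hins' : rel s (ci t')
    swap
    · rw [fblock_neg rel π ci U s hins'] at hv; simp at hv
    rw [fblock_pos rel π ci U s hins] at hu
    rw [fblock_pos rel π ci U s hins'] at hv
    simp only [List.cons.injEq, Prod.mk.injEq, eq_self_iff_true, and_true, true_and] at hu hv
    obtain ⟨-, hE1⟩ := hu
    obtain ⟨hE2, -⟩ := hv
    obtain ⟨hcc, hrelω⟩ := sigma_eq_omega rel π s
      ((congrArg Prod.fst hE1).trans (congrArg Prod.fst hE2).symm)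
    -- positions
    obtain ⟨hts1, hts2⟩ := range'_split ts₁ p m t (ts₂ ++ t' :: ts₃) hts
    obtain ⟨hts3, -⟩ := range'_split ts₂ (t + 1) (m - ts₁.length - 1) t' ts₃ hts2.symm
    have hlen : m = ts₁.length + (ts₂.length + ts₃.length + 2) := by
      have := congrArg List.length hts
      simp [List.length_range'] at this
      omega
    have htt' : t < t' := by omega
    have ht'q : t' ≤ q := by omega
    obtain ⟨l', s', hl1, hl2, hs'c, hs'l⟩ := H4 t t' htt' (by omega) hcc
    have hπ' : π s' (U (t + 1)) (U (t' - 1 + 1)) := by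
      have hle : omegaSetoid rel π (ci t) ≤ π s' :=
        iInf_le (fun s'' : {s'' : S // rel s'' (ci t)} => π s''.1) ⟨s', hs'c⟩
      have := Setoid.le_def.mp hle hrelω
      rwa [show t' - 1 + 1 = t' from by omega]
    exact ih (t' - 1 - (t + 1)) (by omega) (t + 1) (t' - 1) s' (by omega) rfl hπ'
      ⟨l', by omega, by omega, hs'l⟩

end MainAux

section GlueAux

variable {C S : Type}

/-- The `u`-vertex attached to an arbitrary natural number position. -/
def Ufun (k : ℕ) (ℓ : Fin k → ℕ) (hk : 0 < k) (hℓ : ∀ i, 0 < ℓ i) (j : ℕ) :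
    Quotient (glueSetoid k ℓ hk hℓ) :=
  uVert k ℓ hk hℓ ⟨j % k, Nat.mod_lt _ hk⟩

/-- The color attached to an arbitrary natural number position. -/
def cifun {C : Type*} (k : ℕ) (hk : 0 < k) (χ : Fin k → C) (j : ℕ) : C :=
  χ ⟨j % k, Nat.mod_lt _ hk⟩

lemma mod_succ_mod (k t : ℕ) (hk : 0 < k) : (t % k + 1) % k = (t + 1) % k := by
  conv_rhs => rw [← Nat.div_add_mod t k]
  rw [show k * (t / k) + t % k + 1 = t % k + 1 + k * (t / k) from by ring,
    Nat.add_mul_mod_self_left]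

lemma Ufun_succ (k : ℕ) (ℓ : Fin k → ℕ) (hk : 0 < k) (hℓ : ∀ i, 0 < ℓ i) (t : ℕ) :
    Ufun k ℓ hk hℓ (t + 1) = uVert k ℓ hk hℓ ⟨(t % k + 1) % k, Nat.mod_lt _ hk⟩ := by
  unfold Ufun
  congr 1
  exact Fin.ext (mod_succ_mod k t hk).symm

/-- Transport of a relation along one of the paths `P_i`. -/
lemma seg_path {k : ℕ} {ℓ : Fin k → ℕ} (hk : 0 < k) (hℓ : ∀ i, 0 < ℓ i)
    (σ' : Setoid (Quotient (glueSetoid k ℓ hk hℓ))) (i : Fin k)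
    (h : ∀ jv : Fin (ℓ i),
      σ' (Quotient.mk (glueSetoid k ℓ hk hℓ) (Sum.inl ⟨i, jv⟩))
         (Quotient.mk (glueSetoid k ℓ hk hℓ) (Sum.inl (cycNext k ℓ hℓ ⟨i, jv⟩)))) :
    σ' (uVert k ℓ hk hℓ i) (uVert k ℓ hk hℓ ⟨((i : ℕ) + 1) % k, Nat.mod_lt _ hk⟩) := by
  suffices haux : ∀ (d j : ℕ) (hj : j < ℓ i), ℓ i - j = d →
      σ' (Quotient.mk (glueSetoid k ℓ hk hℓ) (Sum.inl ⟨i, ⟨j, hj⟩⟩))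
        (uVert k ℓ hk hℓ ⟨((i : ℕ) + 1) % k, Nat.mod_lt _ hk⟩) by
    exact haux (ℓ i) 0 (hℓ i) (by omega)
  intro d
  induction d with
  | zero => intro j hj h0; omega
  | succ d ihd =>
    intro j hj h0
    have hstep := h ⟨j, hj⟩
    by_cases hlt : j + 1 < ℓ i
    · have hnext : cycNext k ℓ hℓ ⟨i, ⟨j, hj⟩⟩ = ⟨i, ⟨j + 1, hlt⟩⟩ := by
        unfold cycNext
        exact dif_pos hlt
      rw [hnext] at hstep
      exact Setoid.trans' σ' hstep (ihd (j + 1) hlt (by omega))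
    · have hnext : cycNext k ℓ hℓ ⟨i, ⟨j, hj⟩⟩
          = ⟨⟨((i : ℕ) + 1) % k, Nat.mod_lt _ i.pos⟩, ⟨0, hℓ _⟩⟩ := by
        unfold cycNext
        exact dif_neg hlt
      rw [hnext] at hstep
      exact hstep

end GlueAux

/-- **Lemma (inconsistency): for the glued two-cycle test graph of a `𝒢`-reduced word,
the conditions `π_s ≥ ρ_s` for all `s`, `GCC(T,π,s)` a tree for all `s`, and
`J_π = ∅` cannot all hold.** -/
theorem statement14 {C S : Type} [Fintype C] [Fintype S]
    (rel : S → C → Prop) (hne : ∀ c : C, ∃ s : S, rel s c)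
    (Edg : C → C → Prop) (hsymm : Symmetric Edg) (hirr : ∀ c : C, ¬ Edg c c)
    (hstr : ∀ c c' : C, (∀ s : S, ¬ (rel s c ∧ rel s c')) ↔ Edg c c')
    (k : ℕ) (hk : 0 < k) (χ : Fin k → C) (hred : GReduced Edg χ)
    (ℓ : Fin k → ℕ) (hℓ : ∀ i, 0 < ℓ i)
    (π : S → Setoid (Quotient (glueSetoid k ℓ hk hℓ))) :
    ¬ ((∀ s : S,
          rhoSetoid (twoCycleDigr k ℓ hk hℓ) (twoCycleColor k ℓ χ) rel s ≤ π s)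
      ∧ (∀ s : S,
          (GCC (twoCycleDigr k ℓ hk hℓ) (twoCycleColor k ℓ χ) rel π s).IsTree)
      ∧ (∀ i : Fin k,
          ¬ (⨅ s : S, π s) (uVert k ℓ hk hℓ i)
              (uVert k ℓ hk hℓ ⟨((i : ℕ) + 1) % k, Nat.mod_lt _ hk⟩)
          ∧ ¬ (⨅ s : S, π s) (uVert' k ℓ hk hℓ i)
              (uVert' k ℓ hk hℓ ⟨((i : ℕ) + 1) % k, Nat.mod_lt _ hk⟩))) := by
  rintro ⟨h1, h2, h3⟩
  classical
  -- every edge of every `GCC(T,π,s)` is a bridge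
  have H1 : ∀ (s : S) (e : GCCEdge rel π s),
      ¬ Relation.EqvGen
        ((GCC (twoCycleDigr k ℓ hk hℓ) (twoCycleColor k ℓ χ) rel π s).erase e).Adj
        ((GCC (twoCycleDigr k ℓ hk hℓ) (twoCycleColor k ℓ χ) rel π s).src e)
        ((GCC (twoCycleDigr k ℓ hk hℓ) (twoCycleColor k ℓ χ) rel π s).tgt e) := by
    intro s e
    exact not_erase_rel_of_isCutEdge _ e ((h2 s).2 e)
  -- the endpoints of each path `P_i` lie in the same component of `T_{π,c}`
  have H2 : ∀ t : ℕ,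
      (Tpc (twoCycleDigr k ℓ hk hℓ) (twoCycleColor k ℓ χ) rel π (cifun k hk χ t)).compSetoid
        (Quotient.mk (omegaSetoid rel π (cifun k hk χ t)) (Ufun k ℓ hk hℓ t))
        (Quotient.mk (omegaSetoid rel π (cifun k hk χ t)) (Ufun k ℓ hk hℓ (t + 1))) := by
    intro t
    rw [Ufun_succ]
    have hseg := seg_path hk hℓ (Setoid.comap
        (fun v => Quotient.mk (omegaSetoid rel π (cifun k hk χ t)) v)
        (Tpc (twoCycleDigr k ℓ hk hℓ) (twoCycleColor k ℓ χ) rel π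
          (cifun k hk χ t)).compSetoid)
      ⟨t % k, Nat.mod_lt _ hk⟩ ?_
    · exact hseg
    · intro jv
      exact Relation.EqvGen.rel _ _
        ⟨⟨Sum.inl ⟨⟨t % k, Nat.mod_lt _ hk⟩, jv⟩, rfl⟩, rfl, rfl⟩
  -- skipped letters are `π_s`-contractible
  have H3 : ∀ (s : S) (t : ℕ), ¬ rel s (cifun k hk χ t) →
      π s (Ufun k ℓ hk hℓ t) (Ufun k ℓ hk hℓ (t + 1)) := by
    intro s t hrel
    rw [Ufun_succ]
    refine seg_path hk hℓ (π s) ⟨t % k, Nat.mod_lt _ hk⟩ ?_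
    intro jv
    refine Setoid.le_def.mp (h1 s) ?_
    exact Relation.EqvGen.rel _ _
      ⟨Sum.inl ⟨⟨t % k, Nat.mod_lt _ hk⟩, jv⟩, hrel, rfl, rfl⟩
  -- reducedness, in positional form
  have H4 : ∀ t t' : ℕ, t < t' → t' < k → cifun k hk χ t = cifun k hk χ t' →
      ∃ (l : ℕ) (s' : S), t < l ∧ l < t' ∧ rel s' (cifun k hk χ t) ∧
        rel s' (cifun k hk χ l) := by
    intro t t' htt htk hcc
    have ht : t < k := lt_trans htt htk
    have e1 : (⟨t % k, Nat.mod_lt _ hk⟩ : Fin k) = ⟨t, ht⟩ :=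
      Fin.ext (Nat.mod_eq_of_lt ht)
    have e2 : (⟨t' % k, Nat.mod_lt _ hk⟩ : Fin k) = ⟨t', htk⟩ :=
      Fin.ext (Nat.mod_eq_of_lt htk)
    have hcc' : χ ⟨t, ht⟩ = χ ⟨t', htk⟩ := by
      unfold cifun at hcc
      rwa [e1, e2] at hcc
    obtain ⟨lf, hl1, hl2, hnedg⟩ := hred ⟨t, ht⟩ ⟨t', htk⟩ htt hcc'
    have hexs : ∃ s', rel s' (χ ⟨t, ht⟩) ∧ rel s' (χ lf) := by
      by_contra hno
      push_neg at hno
      exact hnedg ((hstr _ _).mp (fun s hand => hno s hand.1 hand.2))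
    obtain ⟨s', hs1, hs2⟩ := hexs
    refine ⟨lf.val, s', hl1, hl2, ?_, ?_⟩
    · unfold cifun
      rwa [e1]
    · unfold cifun
      have e3 : (⟨lf.val % k, Nat.mod_lt _ hk⟩ : Fin k) = lf :=
        Fin.ext (Nat.mod_eq_of_lt lf.isLt)
      rwa [e3]
  -- run the main induction on the whole first cycle
  obtain ⟨s₀, hs₀⟩ := hne (χ ⟨0 % k, Nat.mod_lt _ hk⟩)
  have hclosed : π s₀ (Ufun k ℓ hk hℓ 0) (Ufun k ℓ hk hℓ (k - 1 + 1)) := by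
    have huk : Ufun k ℓ hk hℓ (k - 1 + 1) = Ufun k ℓ hk hℓ 0 := by
      unfold Ufun
      congr 1
      apply Fin.ext
      simp [show k - 1 + 1 = k from by omega, Nat.mod_self]
    rw [huk]
    all_goals exact Setoid.refl' _ _
  obtain ⟨t, htk, hω⟩ := mainInduction (twoCycleDigr k ℓ hk hℓ) (twoCycleColor k ℓ χ)
    rel π (cifun k hk χ) (Ufun k ℓ hk hℓ) k H1 H2 H3 H4
    (k - 1 - 0) 0 (k - 1) s₀ (by omega) rfl hclosed ⟨0, le_rfl, by omega, hs₀⟩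
  -- the two endpoints of `P_t` are in fact `⨅ π`-equivalent
  have hπbar : (⨅ s : S, π s) (Ufun k ℓ hk hℓ t) (Ufun k ℓ hk hℓ (t + 1)) := by
    have hle : Relation.EqvGen.setoid
        (fun a b => a = Ufun k ℓ hk hℓ t ∧ b = Ufun k ℓ hk hℓ (t + 1)) ≤ ⨅ s : S, π s := by
      refine le_iInf fun s => Setoid.le_def.mpr ?_
      intro x y hxy
      have hxy' : Relation.EqvGen
          (fun a b => a = Ufun k ℓ hk hℓ t ∧ b = Ufun k ℓ hk hℓ (t + 1)) x y := hxy
      clear hxy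
      induction hxy' with
      | rel x y hxy =>
        obtain ⟨rfl, rfl⟩ := hxy
        by_cases hrel : rel s (cifun k hk χ t)
        · exact Setoid.le_def.mp
            (iInf_le (fun s'' : {s'' : S // rel s'' (cifun k hk χ t)} => π s''.1)
              ⟨s, hrel⟩) hω
        · exact H3 s t hrel
      | refl x => exact Setoid.refl' _ _
      | symm x y _ ihxy => exact Setoid.symm' _ ihxy
      | trans x y z _ _ ih1 ih2 => exact Setoid.trans' _ ih1 ih2
    exact Setoid.le_def.mp hle (Relation.EqvGen.rel _ _ ⟨rfl, rfl⟩)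
  -- contradiction with the third condition
  have e1 : uVert k ℓ hk hℓ ⟨t, htk⟩ = Ufun k ℓ hk hℓ t := by
    unfold Ufun
    congr 1
    exact Fin.ext (Nat.mod_eq_of_lt htk).symm
  refine (h3 ⟨t, htk⟩).1 ?_
  rw [e1]
  exact hπbar

end GraphPaper
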